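/- Let h_{2p+1} be the (2p+1)-dimensional Heisenberg Lie algebra over a field of characteristic 0 with basis {X_1,...,X_{2p+1}} and brackets [X_{2i−1}, X_{2i}] = X_{2p+1} for 1 ≤ i ≤ p. Then the space Z of skew-symmetric bilinear maps φ : h × h → h satisfying φ(μ(X,Y),Z) + μ(φ(X,Y),Z) = 0 for all X,Y,Z (where μ is the Lie bracket) has dimension p(2p+1). -/

import Mathlib

/-- The space Z²_CH of skew-symmetric bilinear 2-cocycles φ for the CH-coboundary
δ²φ(X,Y,Z) = [X, φ(Y,Z)] + φ(X,[Y,Z]) on a Lie algebra L. -/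
def chTwoCocycles (K : Type*) (L : Type*) [Field K] [LieRing L] [LieAlgebra K L] :
    Submodule K (L →ₗ[K] L →ₗ[K] L) where
  carrier := {φ | (∀ x y : L, φ x y = -φ y x) ∧ ∀ x y z : L, ⁅x, φ y z⁆ + φ x ⁅y, z⁆ = 0}
  add_mem' := by
    rintro a b ⟨ha1, ha2⟩ ⟨hb1, hb2⟩
    constructor
    · intro x y
      simp only [LinearMap.add_apply]
      rw [ha1 x y, hb1 x y]
      abel
    · intro x y z
      simp only [LinearMap.add_apply, lie_add]
      have h : (⁅x, a y z⁆ + a x ⁅y, z⁆) + (⁅x, b y z⁆ + b x ⁅y, z⁆) = 0 := by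
        rw [ha2 x y z, hb2 x y z, add_zero]
      rw [← h]
      abel
  zero_mem' := by
    refine ⟨fun x y => by simp, fun x y z => by simp⟩
  smul_mem' := by
    rintro c a ⟨ha1, ha2⟩
    constructor
    · intro x y
      simp only [LinearMap.smul_apply]
      rw [ha1 x y, smul_neg]
    · intro x y z
      simp only [LinearMap.smul_apply, lie_smul]
      rw [← smul_add, ha2 x y z, smul_zero]

namespace Stmt7Aux

variable {K L : Type*} [Field K] [CharZero K] [LieRing L] [LieAlgebra K L] {p : ℕ}

def tt (p : ℕ) : Fin (2*p+1) := ⟨2*p, Nat.lt_succ_self _⟩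
def ee (j : Fin (2*p)) : Fin (2*p+1) := ⟨j.1, by have := j.2; omega⟩
def ak (k : Fin p) : Fin (2*p+1) := ⟨2*k.1, by have := k.2; linarith⟩
def bk (k : Fin p) : Fin (2*p+1) := ⟨2*k.1+1, by have := k.2; linarith⟩

def brkt (S : L →ₗ[K] L →ₗ[K] K) (v : L) : L →ₗ[K] L →ₗ[K] L :=
  LinearMap.mk₂ K (fun x y => S x y • v)
    (fun x x' y => by simp [add_smul])
    (fun c x y => by simp [mul_smul])
    (fun x y y' => by simp [add_smul])
    (fun c x y => by simp [mul_smul])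

@[simp] lemma brkt_apply (S : L →ₗ[K] L →ₗ[K] K) (v : L) (x y : L) :
    brkt S v x y = S x y • v := rfl

variable (B : Module.Basis (Fin (2*p+1)) K L)

noncomputable def om : L →ₗ[K] L →ₗ[K] K :=
  LinearMap.mk₂ K
    (fun x y => ∑ k : Fin p, (B.repr x (ak k) * B.repr y (bk k) - B.repr x (bk k) * B.repr y (ak k)))
    (fun x x' y => by
      rw [← Finset.sum_add_distrib]
      refine Finset.sum_congr rfl fun k _ => by simp; ring)
    (fun c x y => by
      rw [Finset.smul_sum]
      refine Finset.sum_congr rfl fun k _ => by simp [smul_eq_mul]; ring)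
    (fun x y y' => by
      rw [← Finset.sum_add_distrib]
      refine Finset.sum_congr rfl fun k _ => by simp; ring)
    (fun c x y => by
      rw [Finset.smul_sum]
      refine Finset.sum_congr rfl fun k _ => by simp [smul_eq_mul]; ring)

lemma om_apply (x y : L) : om B x y
    = ∑ k : Fin p, (B.repr x (ak k) * B.repr y (bk k) - B.repr x (bk k) * B.repr y (ak k)) := rfl

lemma om_skew (x y : L) : om B x y = - om B y x := by
  rw [om_apply, om_apply, ← Finset.sum_neg_distrib]
  exact Finset.sum_congr rfl fun k _ => by ring

@[simp] lemma om_right_t (x : L) : om B x (B (tt p)) = 0 := by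
  rw [om_apply]
  refine Finset.sum_eq_zero fun k _ => ?_
  have h1 : B.repr (B (tt p)) (bk k) = 0 := by
    rw [B.repr_self, Finsupp.single_apply, if_neg]
    simp only [tt, bk, Fin.ext_iff]; have := k.2; omega
  have h2 : B.repr (B (tt p)) (ak k) = 0 := by
    rw [B.repr_self, Finsupp.single_apply, if_neg]
    simp only [tt, ak, Fin.ext_iff]; have := k.2; omega
  rw [h1, h2]; ring

@[simp] lemma om_left_t (y : L) : om B (B (tt p)) y = 0 := by
  rw [om_skew, om_right_t, neg_zero]

lemma om_coord_a (k : Fin p) (v : L) : om B (B (ak k)) v = B.repr v (bk k) := by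
  rw [om_apply]
  rw [Finset.sum_eq_single k]
  · rw [B.repr_self]
    rw [Finsupp.single_apply, if_pos rfl, Finsupp.single_apply, if_neg ?_]
    · ring
    · simp only [ak, bk, Fin.ext_iff]; omega
  · intro k' _ hk'
    rw [B.repr_self, Finsupp.single_apply, if_neg, Finsupp.single_apply, if_neg]
    · ring
    · simp only [ak, bk, Fin.ext_iff]; omega
    · simp only [ak, Fin.ext_iff]
      intro h; exact hk' (Fin.ext (by omega))
  · intro h; exact absurd (Finset.mem_univ k) h

lemma om_coord_b (k : Fin p) (v : L) : om B (B (bk k)) v = - B.repr v (ak k) := by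
  rw [om_apply]
  rw [Finset.sum_eq_single k]
  · rw [B.repr_self]
    rw [Finsupp.single_apply, if_neg ?_, Finsupp.single_apply, if_pos rfl]
    · ring
    · simp only [ak, bk, Fin.ext_iff]; omega
  · intro k' _ hk'
    rw [B.repr_self, Finsupp.single_apply, if_neg, Finsupp.single_apply, if_neg]
    · ring
    · simp only [bk, Fin.ext_iff]
      intro h; exact hk' (Fin.ext (by omega))
    · simp only [ak, bk, Fin.ext_iff]; omega
  · intro h; exact absurd (Finset.mem_univ k) h

lemma om_pair (k : Fin p) : om B (B (ak k)) (B (bk k)) = 1 := by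
  rw [om_coord_a, B.repr_self, Finsupp.single_apply, if_pos rfl]

lemma om_zero_pair (i j : Fin (2*p+1))
    (h : ∀ k : Fin p, ¬(i.1 = 2*k.1 ∧ j.1 = 2*k.1+1) ∧ ¬(j.1 = 2*k.1 ∧ i.1 = 2*k.1+1)) :
    om B (B i) (B j) = 0 := by
  rw [om_apply]
  refine Finset.sum_eq_zero fun k _ => ?_
  obtain ⟨h1, h2⟩ := h k
  simp only [B.repr_self, Finsupp.single_apply, ak, bk, Fin.ext_iff]
  split_ifs <;> first | ring1 | omega

end Stmt7Aux

namespace Stmt7Aux2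
open Stmt7Aux
variable {K L : Type*} [Field K] [CharZero K] [LieRing L] [LieAlgebra K L] {p : ℕ}
variable (B : Module.Basis (Fin (2*p+1)) K L)

lemma bracket_eq
    (hb1 : ∀ i : Fin p, ⁅B ⟨2 * i.1, by have := i.2; linarith⟩,
        B ⟨2 * i.1 + 1, by have := i.2; linarith⟩⁆ = B ⟨2 * p, Nat.lt_succ_self _⟩)
    (hb2 : ∀ i j : Fin (2 * p + 1),
        (∀ k : Fin p, ¬(i.1 = 2 * k.1 ∧ j.1 = 2 * k.1 + 1) ∧
          ¬(j.1 = 2 * k.1 ∧ i.1 = 2 * k.1 + 1)) → ⁅B i, B j⁆ = 0)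
    (x y : L) : ⁅x, y⁆ = om B x y • B (tt p) := by
  have key : (LinearMap.mk₂ K (fun x y : L => ⁅x, y⁆) add_lie smul_lie lie_add lie_smul)
      = brkt (om B) (B (tt p)) := by
    apply B.ext; intro i; apply B.ext; intro j
    show ⁅B i, B j⁆ = om B (B i) (B j) • B (tt p)
    by_cases hex : ∃ k : Fin p, i = ak k ∧ j = bk k
    · obtain ⟨k, hi, hj⟩ := hex
      subst hi; subst hj
      rw [om_pair, one_smul]
      exact hb1 k
    · by_cases hex2 : ∃ k : Fin p, i = bk k ∧ j = ak k
      · obtain ⟨k, hi, hj⟩ := hex2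
        subst hi; subst hj
        rw [om_skew, om_pair]
        have h : ⁅B (ak k), B (bk k)⁆ = B (tt p) := hb1 k
        rw [← lie_skew, h]
        simp
      · push_neg at hex hex2
        have hc : ∀ k : Fin p, ¬(i.1 = 2 * k.1 ∧ j.1 = 2 * k.1 + 1) ∧
            ¬(j.1 = 2 * k.1 ∧ i.1 = 2 * k.1 + 1) := by
          intro k
          have h1 := hex k
          have h2 := hex2 k
          simp only [ak, bk, ne_eq, Fin.ext_iff] at h1 h2
          constructor
          · rintro ⟨ha, hb⟩; exact h1 ha hb
          · rintro ⟨ha, hb⟩; exact h2 hb ha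
        rw [hb2 i j hc, om_zero_pair B i j hc, zero_smul]
  exact LinearMap.ext_iff.1 (LinearMap.ext_iff.1 key x) y

end Stmt7Aux2

namespace Stmt7Aux3
open Stmt7Aux
variable {K L : Type*} [Field K] [CharZero K] [LieRing L] [LieAlgebra K L] {p : ℕ}
variable (B : Module.Basis (Fin (2*p+1)) K L)

noncomputable def Wv (w : Fin (2*p) → K) : L := ∑ j : Fin (2*p), w j • B (ee j)

@[simp] lemma repr_Wv_ee (w : Fin (2*p) → K) (j : Fin (2*p)) :
    B.repr (Wv B w) (ee j) = w j := by
  simp only [Wv, map_sum, map_smul, B.repr_self, Finsupp.coe_finset_sum, Finset.sum_apply,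
    Finsupp.smul_apply, Finsupp.single_apply, smul_eq_mul, mul_ite, mul_one, mul_zero]
  have he : ∀ i : Fin (2*p), (ee (p := p) i = ee j) = (i = j) := by
    intro i
    simp [ee, Fin.ext_iff]
  simp only [he]
  simp

@[simp] lemma repr_Wv_t (w : Fin (2*p) → K) : B.repr (Wv B w) (tt p) = 0 := by
  simp only [Wv, map_sum, map_smul, B.repr_self, Finsupp.coe_finset_sum, Finset.sum_apply,
    Finsupp.smul_apply, Finsupp.single_apply, smul_eq_mul, mul_ite, mul_one, mul_zero]
  refine Finset.sum_eq_zero fun i _ => ?_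
  rw [if_neg]
  simp only [ee, tt, Fin.ext_iff]
  have := i.2; omega

lemma decompose (v : L) :
    v = Wv B (fun j => B.repr v (ee j)) + B.repr v (tt p) • B (tt p) := by
  conv_lhs => rw [← B.sum_repr v]
  rw [Fin.sum_univ_castSucc]
  have h1 : ∀ j : Fin (2*p), Fin.castSucc j = ee j := fun j => rfl
  have h2 : Fin.last (2*p) = tt p := rfl
  simp only [h1, h2]
  rfl

lemma central (v : L)
    (hbr : ∀ x y : L, ⁅x, y⁆ = om B x y • B (tt p))
    (hv : ∀ x : L, ⁅x, v⁆ = 0) :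
    v = B.repr v (tt p) • B (tt p) := by
  have hBt : B (tt p) ≠ 0 := B.ne_zero _
  have hb : ∀ k : Fin p, B.repr v (bk k) = 0 := by
    intro k
    have h := hv (B (ak k))
    rw [hbr, om_coord_a, smul_eq_zero] at h
    exact h.resolve_right hBt
  have ha : ∀ k : Fin p, B.repr v (ak k) = 0 := by
    intro k
    have h := hv (B (bk k))
    rw [hbr, om_coord_b, smul_eq_zero, neg_eq_zero] at h
    exact h.resolve_right hBt
  have hee : ∀ j : Fin (2*p), B.repr v (ee j) = 0 := by
    intro j
    rcases Nat.even_or_odd j.1 with ⟨m, hm⟩ | ⟨m, hm⟩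
    · have hmp : m < p := by have := j.2; omega
      have : ee j = ak ⟨m, hmp⟩ := by simp [ee, ak, Fin.ext_iff]; omega
      rw [this]; exact ha _
    · have hmp : m < p := by have := j.2; omega
      have : ee j = bk ⟨m, hmp⟩ := by simp [ee, bk, Fin.ext_iff]; omega
      rw [this]; exact hb _
  conv_lhs => rw [decompose B v]
  have : Wv B (fun j => B.repr v (ee j)) = 0 := by
    refine Finset.sum_eq_zero fun j _ => ?_
    simp [hee j]
  rw [this, zero_add]

end Stmt7Aux3

namespace Stmt7Aux4
open Stmt7Aux Stmt7Aux3
variable {K L : Type*} [Field K] [CharZero K] [LieRing L] [LieAlgebra K L] {p : ℕ}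

abbrev PairIdx (p : ℕ) := {q : Fin (2*p) × Fin (2*p) // q.1 < q.2}

variable (B : Module.Basis (Fin (2*p+1)) K L)

noncomputable def Sc (d : (Fin (2*p) → K) × (PairIdx p → K)) : L →ₗ[K] L →ₗ[K] K :=
  LinearMap.mk₂ K
    (fun x y => (∑ q : PairIdx p, d.2 q *
        (B.repr x (ee q.1.1) * B.repr y (ee q.1.2) - B.repr x (ee q.1.2) * B.repr y (ee q.1.1)))
      + B.repr y (tt p) * om B x (Wv B d.1) - B.repr x (tt p) * om B y (Wv B d.1))
    (fun x x' y => by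
      simp only [map_add, Finsupp.coe_add, Pi.add_apply, LinearMap.add_apply]
      have hs : (∑ q : PairIdx p, d.2 q *
          ((B.repr x (ee q.1.1) + B.repr x' (ee q.1.1)) * B.repr y (ee q.1.2) -
           (B.repr x (ee q.1.2) + B.repr x' (ee q.1.2)) * B.repr y (ee q.1.1)))
          = (∑ q : PairIdx p, d.2 q *
          (B.repr x (ee q.1.1) * B.repr y (ee q.1.2) - B.repr x (ee q.1.2) * B.repr y (ee q.1.1)))
          + (∑ q : PairIdx p, d.2 q *
          (B.repr x' (ee q.1.1) * B.repr y (ee q.1.2) - B.repr x' (ee q.1.2) * B.repr y (ee q.1.1))) := by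
        rw [← Finset.sum_add_distrib]
        exact Finset.sum_congr rfl fun q _ => by ring
      rw [hs]; ring)
    (fun c x y => by
      simp only [map_smul, Finsupp.coe_smul, Pi.smul_apply, LinearMap.smul_apply, smul_eq_mul]
      have hs : (∑ q : PairIdx p, d.2 q *
          ((c * B.repr x (ee q.1.1)) * B.repr y (ee q.1.2) -
           (c * B.repr x (ee q.1.2)) * B.repr y (ee q.1.1)))
          = c * (∑ q : PairIdx p, d.2 q *
          (B.repr x (ee q.1.1) * B.repr y (ee q.1.2) - B.repr x (ee q.1.2) * B.repr y (ee q.1.1))) := by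
        rw [Finset.mul_sum]
        exact Finset.sum_congr rfl fun q _ => by ring
      rw [hs]; ring)
    (fun x y y' => by
      simp only [map_add, Finsupp.coe_add, Pi.add_apply, LinearMap.add_apply]
      have hs : (∑ q : PairIdx p, d.2 q *
          (B.repr x (ee q.1.1) * (B.repr y (ee q.1.2) + B.repr y' (ee q.1.2)) -
           B.repr x (ee q.1.2) * (B.repr y (ee q.1.1) + B.repr y' (ee q.1.1))))
          = (∑ q : PairIdx p, d.2 q *
          (B.repr x (ee q.1.1) * B.repr y (ee q.1.2) - B.repr x (ee q.1.2) * B.repr y (ee q.1.1)))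
          + (∑ q : PairIdx p, d.2 q *
          (B.repr x (ee q.1.1) * B.repr y' (ee q.1.2) - B.repr x (ee q.1.2) * B.repr y' (ee q.1.1))) := by
        rw [← Finset.sum_add_distrib]
        exact Finset.sum_congr rfl fun q _ => by ring
      rw [hs]; ring)
    (fun c x y => by
      simp only [map_smul, Finsupp.coe_smul, Pi.smul_apply, LinearMap.smul_apply, smul_eq_mul]
      have hs : (∑ q : PairIdx p, d.2 q *
          (B.repr x (ee q.1.1) * (c * B.repr y (ee q.1.2)) -
           B.repr x (ee q.1.2) * (c * B.repr y (ee q.1.1))))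
          = c * (∑ q : PairIdx p, d.2 q *
          (B.repr x (ee q.1.1) * B.repr y (ee q.1.2) - B.repr x (ee q.1.2) * B.repr y (ee q.1.1))) := by
        rw [Finset.mul_sum]
        exact Finset.sum_congr rfl fun q _ => by ring
      rw [hs]; ring)

lemma Sc_apply (d : (Fin (2*p) → K) × (PairIdx p → K)) (x y : L) :
    Sc B d x y = (∑ q : PairIdx p, d.2 q *
        (B.repr x (ee q.1.1) * B.repr y (ee q.1.2) - B.repr x (ee q.1.2) * B.repr y (ee q.1.1)))
      + B.repr y (tt p) * om B x (Wv B d.1) - B.repr x (tt p) * om B y (Wv B d.1) := rfl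

noncomputable def Gd (d : (Fin (2*p) → K) × (PairIdx p → K)) : L →ₗ[K] L →ₗ[K] L :=
  brkt (Sc B d) (B (tt p)) - brkt (om B) (Wv B d.1)

lemma Gd_apply (d : (Fin (2*p) → K) × (PairIdx p → K)) (x y : L) :
    Gd B d x y = Sc B d x y • B (tt p) - om B x y • Wv B d.1 := rfl

@[simp] lemma repr_t_ee (j : Fin (2*p)) : B.repr (B (tt p)) (ee j) = 0 := by
  rw [B.repr_self, Finsupp.single_apply, if_neg]
  simp only [tt, ee, Fin.ext_iff]
  have := j.2; omega

@[simp] lemma repr_t_t : B.repr (B (tt p)) (tt p) = 1 := by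
  rw [B.repr_self, Finsupp.single_apply, if_pos rfl]

lemma Sc_x_t (d : (Fin (2*p) → K) × (PairIdx p → K)) (x : L) :
    Sc B d x (B (tt p)) = om B x (Wv B d.1) := by
  rw [Sc_apply]
  rw [Finset.sum_eq_zero fun q _ => by rw [repr_t_ee, repr_t_ee]; ring]
  rw [repr_t_t, om_left_t]
  ring

lemma Gd_x_t (d : (Fin (2*p) → K) × (PairIdx p → K)) (x : L) :
    Gd B d x (B (tt p)) = om B x (Wv B d.1) • B (tt p) := by
  rw [Gd_apply, Sc_x_t, om_right_t, zero_smul, sub_zero]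

end Stmt7Aux4

namespace Stmt7Aux5
open Stmt7Aux Stmt7Aux3 Stmt7Aux4
variable {K L : Type*} [Field K] [CharZero K] [LieRing L] [LieAlgebra K L] {p : ℕ}
variable (B : Module.Basis (Fin (2*p+1)) K L)

lemma mem_iff (φ : L →ₗ[K] L →ₗ[K] L) : φ ∈ chTwoCocycles K L ↔
    ((∀ x y : L, φ x y = -φ y x) ∧ ∀ x y z : L, ⁅x, φ y z⁆ + φ x ⁅y, z⁆ = 0) := Iff.rfl

lemma Sc_skew (d : (Fin (2*p) → K) × (PairIdx p → K)) (x y : L) :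
    Sc B d x y = - Sc B d y x := by
  rw [Sc_apply, Sc_apply]
  have hs : (∑ q : PairIdx p, d.2 q *
      (B.repr x (ee q.1.1) * B.repr y (ee q.1.2) - B.repr x (ee q.1.2) * B.repr y (ee q.1.1)))
      = - (∑ q : PairIdx p, d.2 q *
      (B.repr y (ee q.1.1) * B.repr x (ee q.1.2) - B.repr y (ee q.1.2) * B.repr x (ee q.1.1))) := by
    rw [← Finset.sum_neg_distrib]
    exact Finset.sum_congr rfl fun q _ => by ring
  rw [hs]; ring

lemma Gd_skew (d : (Fin (2*p) → K) × (PairIdx p → K)) (x y : L) :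
    Gd B d x y = - Gd B d y x := by
  rw [Gd_apply, Gd_apply, Sc_skew, om_skew]
  rw [neg_smul, neg_smul]
  abel

lemma Gd_cocycle (hbr : ∀ x y : L, ⁅x, y⁆ = om B x y • B (tt p))
    (d : (Fin (2*p) → K) × (PairIdx p → K)) (x y z : L) :
    ⁅x, Gd B d y z⁆ + Gd B d x ⁅y, z⁆ = 0 := by
  rw [hbr x (Gd B d y z), hbr y z]
  have h1 : om B x (Gd B d y z) = - (om B y z * om B x (Wv B d.1)) := by
    rw [Gd_apply, map_sub, map_smul, map_smul, om_right_t]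
    simp only [smul_eq_mul, mul_zero]
    ring
  have h2 : Gd B d x (om B y z • B (tt p)) = om B y z • (om B x (Wv B d.1) • B (tt p)) := by
    rw [map_smul, Gd_x_t]
  rw [h1, h2, smul_smul, neg_smul]
  exact neg_add_cancel _

lemma Gd_mem (hbr : ∀ x y : L, ⁅x, y⁆ = om B x y • B (tt p))
    (d : (Fin (2*p) → K) × (PairIdx p → K)) :
    Gd B d ∈ chTwoCocycles K L :=
  ⟨Gd_skew B d, Gd_cocycle B hbr d⟩

end Stmt7Aux5

namespace Stmt7Aux6
open Stmt7Aux Stmt7Aux3 Stmt7Aux4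
variable {K L : Type*} [Field K] [CharZero K] [LieRing L] [LieAlgebra K L] {p : ℕ}
variable (B : Module.Basis (Fin (2*p+1)) K L)

lemma Wv_add (w w' : Fin (2*p) → K) : Wv B (w + w') = Wv B w + Wv B w' := by
  rw [Wv, Wv, Wv, ← Finset.sum_add_distrib]
  exact Finset.sum_congr rfl fun j _ => by rw [Pi.add_apply, add_smul]

lemma Wv_smul (c : K) (w : Fin (2*p) → K) : Wv B (c • w) = c • Wv B w := by
  rw [Wv, Wv, Finset.smul_sum]
  exact Finset.sum_congr rfl fun j _ => by rw [Pi.smul_apply, smul_smul, smul_eq_mul]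

lemma Sc_add (d d' : (Fin (2*p) → K) × (PairIdx p → K)) :
    Sc B (d + d') = Sc B d + Sc B d' := by
  apply LinearMap.ext; intro x; apply LinearMap.ext; intro y
  simp only [Sc_apply, LinearMap.add_apply, Prod.fst_add, Prod.snd_add, Pi.add_apply,
    Wv_add, map_add]
  have hs : (∑ q : PairIdx p, (d.2 q + d'.2 q) *
      (B.repr x (ee q.1.1) * B.repr y (ee q.1.2) - B.repr x (ee q.1.2) * B.repr y (ee q.1.1)))
      = (∑ q : PairIdx p, d.2 q *
      (B.repr x (ee q.1.1) * B.repr y (ee q.1.2) - B.repr x (ee q.1.2) * B.repr y (ee q.1.1)))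
      + (∑ q : PairIdx p, d'.2 q *
      (B.repr x (ee q.1.1) * B.repr y (ee q.1.2) - B.repr x (ee q.1.2) * B.repr y (ee q.1.1))) := by
    rw [← Finset.sum_add_distrib]
    exact Finset.sum_congr rfl fun q _ => by ring
  rw [hs]; ring

lemma Sc_smul (c : K) (d : (Fin (2*p) → K) × (PairIdx p → K)) :
    Sc B (c • d) = c • Sc B d := by
  apply LinearMap.ext; intro x; apply LinearMap.ext; intro y
  simp only [Sc_apply, LinearMap.smul_apply, Prod.smul_fst, Prod.smul_snd, Pi.smul_apply,
    Wv_smul, map_smul, smul_eq_mul]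
  have hs : (∑ q : PairIdx p, (c * d.2 q) *
      (B.repr x (ee q.1.1) * B.repr y (ee q.1.2) - B.repr x (ee q.1.2) * B.repr y (ee q.1.1)))
      = c * (∑ q : PairIdx p, d.2 q *
      (B.repr x (ee q.1.1) * B.repr y (ee q.1.2) - B.repr x (ee q.1.2) * B.repr y (ee q.1.1))) := by
    rw [Finset.mul_sum]
    exact Finset.sum_congr rfl fun q _ => by ring
  rw [hs]; ring

lemma brkt_Sadd (S S' : L →ₗ[K] L →ₗ[K] K) (v : L) :
    brkt (S + S') v = brkt S v + brkt S' v := by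
  apply LinearMap.ext; intro x; apply LinearMap.ext; intro y
  simp [add_smul]

lemma brkt_vadd (S : L →ₗ[K] L →ₗ[K] K) (v v' : L) :
    brkt S (v + v') = brkt S v + brkt S v' := by
  apply LinearMap.ext; intro x; apply LinearMap.ext; intro y
  simp [smul_add]

lemma brkt_Ssmul (c : K) (S : L →ₗ[K] L →ₗ[K] K) (v : L) :
    brkt (c • S) v = c • brkt S v := by
  apply LinearMap.ext; intro x; apply LinearMap.ext; intro y
  simp [smul_smul]

lemma brkt_vsmul (c : K) (S : L →ₗ[K] L →ₗ[K] K) (v : L) :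
    brkt S (c • v) = c • brkt S v := by
  apply LinearMap.ext; intro x; apply LinearMap.ext; intro y
  simp only [brkt_apply, LinearMap.smul_apply]
  rw [smul_comm]

lemma Gd_add (d d' : (Fin (2*p) → K) × (PairIdx p → K)) :
    Gd B (d + d') = Gd B d + Gd B d' := by
  rw [Gd, Gd, Gd, Sc_add, Prod.fst_add, Wv_add, brkt_Sadd, brkt_vadd]
  abel

lemma Gd_smul (c : K) (d : (Fin (2*p) → K) × (PairIdx p → K)) :
    Gd B (c • d) = c • Gd B d := by
  rw [Gd, Gd, Sc_smul, Prod.smul_fst, Wv_smul, brkt_Ssmul, brkt_vsmul]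
  exact (smul_sub c _ _).symm

noncomputable def GLm : ((Fin (2*p) → K) × (PairIdx p → K)) →ₗ[K] (L →ₗ[K] L →ₗ[K] L) where
  toFun := Gd B
  map_add' := Gd_add B
  map_smul' := Gd_smul B

@[simp] lemma GLm_apply (d : (Fin (2*p) → K) × (PairIdx p → K)) : GLm B d = Gd B d := rfl

end Stmt7Aux6

namespace Stmt7Aux7
open Stmt7Aux Stmt7Aux3 Stmt7Aux4 Stmt7Aux5 Stmt7Aux6
variable {K L : Type*} [Field K] [CharZero K] [LieRing L] [LieAlgebra K L] {p : ℕ}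
variable (B : Module.Basis (Fin (2*p+1)) K L)

@[simp] lemma repr_ee_ee (a b : Fin (2*p)) :
    B.repr (B (ee a)) (ee b) = if a = b then 1 else 0 := by
  rw [B.repr_self, Finsupp.single_apply]
  exact if_congr (by simp [ee, Fin.ext_iff]) rfl rfl

@[simp] lemma repr_ee_t (a : Fin (2*p)) : B.repr (B (ee a)) (tt p) = 0 := by
  rw [B.repr_self, Finsupp.single_apply, if_neg]
  simp only [ee, tt, Fin.ext_iff]
  have := a.2; omega

lemma Sc_pair (d : (Fin (2*p) → K) × (PairIdx p → K)) (q : PairIdx p) :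
    Sc B d (B (ee q.1.1)) (B (ee q.1.2)) = d.2 q := by
  rw [Sc_apply, repr_ee_t, repr_ee_t, zero_mul, zero_mul, add_zero, sub_zero]
  rw [Finset.sum_eq_single q]
  · rw [repr_ee_ee, repr_ee_ee, repr_ee_ee, repr_ee_ee, if_pos rfl, if_pos rfl]
    have hlt : q.1.1 < q.1.2 := q.2
    rw [if_neg, if_neg]
    · ring
    · intro h; rw [h] at hlt; exact lt_irrefl _ hlt
    · intro h; rw [h] at hlt; exact lt_irrefl _ hlt
  · intro q' _ hne
    have hq : ¬(q'.1.1 = q.1.1 ∧ q'.1.2 = q.1.2) := by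
      rintro ⟨h1, h2⟩
      exact hne (Subtype.ext (Prod.ext h1 h2))
    have l1 : q.1.1.1 < q.1.2.1 := q.2
    have l2 : q'.1.1.1 < q'.1.2.1 := q'.2
    simp only [repr_ee_ee, Fin.ext_iff] at hq ⊢
    split_ifs <;> first | ring1 | omega
  · intro h; exact absurd (Finset.mem_univ q) h

lemma Sc_t_y (d : (Fin (2*p) → K) × (PairIdx p → K)) (y : L) :
    Sc B d (B (tt p)) y = - om B y (Wv B d.1) := by
  rw [Sc_apply]
  rw [Finset.sum_eq_zero fun q _ => by rw [repr_t_ee, repr_t_ee]; ring]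
  rw [repr_t_t, om_left_t]
  ring

lemma repr_Gd_pair (d : (Fin (2*p) → K) × (PairIdx p → K)) (q : PairIdx p) :
    B.repr (Gd B d (B (ee q.1.1)) (B (ee q.1.2))) (tt p) = d.2 q := by
  rw [Gd_apply, map_sub, map_smul, map_smul]
  simp only [Finsupp.coe_sub, Pi.sub_apply, Finsupp.coe_smul, Pi.smul_apply, smul_eq_mul,
    repr_t_t, repr_Wv_t, mul_one, mul_zero, sub_zero]
  exact Sc_pair B d q

lemma repr_Gd_e01 (hp : 1 ≤ p) (d : (Fin (2*p) → K) × (PairIdx p → K)) (j : Fin (2*p)) :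
    B.repr (Gd B d (B (ee ⟨0, by omega⟩)) (B (ee ⟨1, by omega⟩))) (ee j) = - d.1 j := by
  have hom : om B (B (ee (⟨0, by omega⟩ : Fin (2*p)))) (B (ee (⟨1, by omega⟩ : Fin (2*p)))) = 1 := by
    have h0 : ee (⟨0, by omega⟩ : Fin (2*p)) = ak (⟨0, hp⟩ : Fin p) := by
      simp [ee, ak, Fin.ext_iff]
    have h1 : ee (⟨1, by omega⟩ : Fin (2*p)) = bk (⟨0, hp⟩ : Fin p) := by
      simp [ee, bk, Fin.ext_iff]
    rw [h0, h1, om_pair]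
  rw [Gd_apply, hom, one_smul, map_sub, map_smul]
  simp only [Finsupp.coe_sub, Pi.sub_apply, Finsupp.coe_smul, Pi.smul_apply, smul_eq_mul,
    repr_t_ee, repr_Wv_ee, mul_zero]
  ring

lemma GLm_injective (hp : 1 ≤ p) : Function.Injective (GLm (K := K) (L := L) (p := p) B) := by
  rw [injective_iff_map_eq_zero]
  intro d hd
  rw [GLm_apply] at hd
  have h2 : d.2 = 0 := by
    funext q
    have := repr_Gd_pair B d q
    rw [hd] at this
    simpa using this.symm
  have h1 : d.1 = 0 := by
    funext j
    have := repr_Gd_e01 B hp d j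
    rw [hd] at this
    simp only [LinearMap.zero_apply, map_zero, Finsupp.coe_zero, Pi.zero_apply] at this
    have := this.symm
    simpa [neg_eq_zero] using this
  exact Prod.ext h1 h2

end Stmt7Aux7

namespace Stmt7Aux8
open Stmt7Aux Stmt7Aux3 Stmt7Aux4 Stmt7Aux5 Stmt7Aux6 Stmt7Aux7
variable {K L : Type*} [Field K] [CharZero K] [LieRing L] [LieAlgebra K L] {p : ℕ}
variable (B : Module.Basis (Fin (2*p+1)) K L)

lemma scal_diag {a : K} (h : a = -a) : a = 0 := by
  have h2 : a + a = 0 := by nth_rewrite 1 [h]; exact neg_add_cancel a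
  have h3 : (2 : K) * a = 0 := by rw [two_mul]; exact h2
  rcases mul_eq_zero.mp h3 with h4 | h4
  · exact absurd h4 two_ne_zero
  · exact h4

lemma vec_diag {K' L' : Type*} [Field K'] [CharZero K'] [AddCommGroup L'] [Module K' L']
    {v : L'} (h : v = -v) : v = 0 := by
  have h2 : v + v = 0 := by nth_rewrite 1 [h]; exact neg_add_cancel v
  have h3 : (2 : K') • v = 0 := by rw [two_smul]; exact h2
  rcases smul_eq_zero.mp h3 with h4 | h4
  · exact absurd h4 two_ne_zero
  · exact h4

lemma alg_step {M : Type*} [AddCommGroup M] [Module K M] (fv Wp Wvv t : M) (a c r : K)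
    (h1 : fv + c • Wp = (a + c * r) • t) (h2 : Wp = Wvv + r • t) :
    fv = a • t - c • Wvv := by
  have h3 : fv = (a + c * r) • t - c • Wp := by
    rw [← h1]
    exact (add_sub_cancel_right _ _).symm
  rw [h3, h2]
  module

lemma om_e01 (hp : 1 ≤ p) :
    om B (B (ee (⟨0, by omega⟩ : Fin (2*p)))) (B (ee (⟨1, by omega⟩ : Fin (2*p)))) = 1 := by
  have h0 : ee (⟨0, by omega⟩ : Fin (2*p)) = ak (⟨0, hp⟩ : Fin p) := by
    simp [ee, ak, Fin.ext_iff]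
  have h1 : ee (⟨1, by omega⟩ : Fin (2*p)) = bk (⟨0, hp⟩ : Fin p) := by
    simp [ee, bk, Fin.ext_iff]
  rw [h0, h1, om_pair]

lemma surj (hp : 1 ≤ p) (hbr : ∀ x y : L, ⁅x, y⁆ = om B x y • B (tt p))
    (φ : L →ₗ[K] L →ₗ[K] L) (hs : ∀ x y : L, φ x y = -φ y x)
    (hc : ∀ x y z : L, ⁅x, φ y z⁆ + φ x ⁅y, z⁆ = 0) :
    ∃ d : (Fin (2*p) → K) × (PairIdx p → K), Gd B d = φ := by
  have hdiagφ : ∀ x : L, φ x x = 0 := fun x => vec_diag (K' := K) (hs x x)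
  set Wp : L := - φ (B (ee (⟨0, by omega⟩ : Fin (2*p)))) (B (ee (⟨1, by omega⟩ : Fin (2*p)))) with hWp
  refine ⟨(fun j => B.repr Wp (ee j), fun q => B.repr (φ (B (ee q.1.1)) (B (ee q.1.2))) (tt p)), ?_⟩
  set w : Fin (2*p) → K := fun j => B.repr Wp (ee j) with hw
  have hW : Wp = Wv B w + B.repr Wp (tt p) • B (tt p) := decompose B Wp
  have h01 : ⁅B (ee (⟨0, by omega⟩ : Fin (2*p))), B (ee (⟨1, by omega⟩ : Fin (2*p)))⁆
      = B (tt p) := by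
    rw [hbr, om_e01 B hp, one_smul]
  have hWlie : ∀ x : L, ⁅x, Wp⁆ = om B x (Wv B w) • B (tt p) := by
    intro x
    rw [hbr x Wp]
    congr 1
    conv_lhs => rw [hW]
    rw [map_add, map_smul, om_right_t, smul_zero, add_zero]
  have hxt : ∀ x : L, φ x (B (tt p)) = om B x (Wv B w) • B (tt p) := by
    intro x
    have h := hc x (B (ee (⟨0, by omega⟩ : Fin (2*p)))) (B (ee (⟨1, by omega⟩ : Fin (2*p))))
    rw [h01] at h
    have hb : φ x (B (tt p)) = -⁅x, φ (B (ee (⟨0, by omega⟩ : Fin (2*p))))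
        (B (ee (⟨1, by omega⟩ : Fin (2*p))))⁆ := by
      rw [add_comm] at h
      exact eq_neg_of_add_eq_zero_left h
    rw [hb, ← lie_neg, ← hWp, hWlie]
  have master : ∀ i j : Fin (2*p+1), φ (B i) (B j)
      = B.repr (φ (B i) (B j)) (tt p) • B (tt p) - om B (B i) (B j) • Wv B w := by
    intro i j
    have hcen : ∀ x : L, ⁅x, φ (B i) (B j) + om B (B i) (B j) • Wp⁆ = 0 := by
      intro x
      rw [lie_add, lie_smul]
      have h := hc x (B i) (B j)
      rw [hbr (B i) (B j), map_smul] at h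
      have h1 : ⁅x, φ (B i) (B j)⁆ = -(om B (B i) (B j) • φ x (B (tt p))) :=
        eq_neg_of_add_eq_zero_left h
      rw [h1, hWlie x, hxt x]
      exact neg_add_cancel _
    have hu := central B _ hbr hcen
    have hrepr : B.repr (φ (B i) (B j) + om B (B i) (B j) • Wp) (tt p)
        = B.repr (φ (B i) (B j)) (tt p) + om B (B i) (B j) * B.repr Wp (tt p) := by
      rw [map_add, map_smul]
      simp [smul_eq_mul]
    refine alg_step (φ (B i) (B j)) Wp (Wv B w) (B (tt p)) _ _ (B.repr Wp (tt p)) ?_ hW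
    rw [← hrepr]
    exact hu
  apply B.ext; intro i; apply B.ext; intro j
  show Gd B _ (B i) (B j) = φ (B i) (B j)
  rw [Gd_apply, master i j]
  congr 1
  congr 1
  -- goal : Sc B d (B i) (B j) = B.repr (φ (B i) (B j)) (tt p)
  by_cases hi : i = tt p
  · by_cases hj : j = tt p
    · subst hi; subst hj
      rw [Sc_x_t, om_left_t, hdiagφ, map_zero]
      rfl
    · subst hi
      rw [Sc_t_y]
      have hφ : φ (B (tt p)) (B j) = -(om B (B j) (Wv B w) • B (tt p)) := by
        rw [hs (B (tt p)) (B j), hxt (B j)]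
      rw [hφ, map_neg, map_smul]
      simp only [Finsupp.coe_neg, Pi.neg_apply, Finsupp.coe_smul, Pi.smul_apply, smul_eq_mul,
        repr_t_t, mul_one]
  · by_cases hj : j = tt p
    · subst hj
      rw [Sc_x_t, hxt (B i), map_smul]
      simp only [Finsupp.coe_smul, Pi.smul_apply, smul_eq_mul, repr_t_t, mul_one]
    · have hilt : i.1 < 2*p := by have := i.2; simp only [tt, Fin.ext_iff] at hi; omega
      have hjlt : j.1 < 2*p := by have := j.2; simp only [tt, Fin.ext_iff] at hj; omega
      have hi' : i = ee ⟨i.1, hilt⟩ := Fin.ext rfl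
      have hj' : j = ee ⟨j.1, hjlt⟩ := Fin.ext rfl
      rw [hi', hj']
      rcases lt_trichotomy (⟨i.1, hilt⟩ : Fin (2*p)) ⟨j.1, hjlt⟩ with hlt | heq | hgt
      · exact Sc_pair B _ ⟨(⟨i.1, hilt⟩, ⟨j.1, hjlt⟩), hlt⟩
      · rw [heq]
        rw [show Sc B (w, fun q => B.repr (φ (B (ee q.1.1)) (B (ee q.1.2))) (tt p))
            (B (ee ⟨j.1, hjlt⟩)) (B (ee ⟨j.1, hjlt⟩)) = 0 from
          scal_diag (Sc_skew B _ (B (ee ⟨j.1, hjlt⟩)) (B (ee ⟨j.1, hjlt⟩)))]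
        rw [hdiagφ, map_zero]
        rfl
      · rw [Sc_skew]
        rw [Sc_pair B _ ⟨(⟨j.1, hjlt⟩, ⟨i.1, hilt⟩), hgt⟩]
        rw [hs (B (ee ⟨i.1, hilt⟩)) (B (ee ⟨j.1, hjlt⟩)), map_neg]
        rfl

end Stmt7Aux8

namespace Stmt7Aux9
open Stmt7Aux Stmt7Aux3 Stmt7Aux4 Stmt7Aux5 Stmt7Aux6 Stmt7Aux7 Stmt7Aux8

def pairEquiv (p : ℕ) : PairIdx p ≃ Σ j : Fin (2*p), Fin j.1 where
  toFun q := ⟨q.1.2, ⟨q.1.1.1, by exact q.2⟩⟩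
  invFun s := ⟨(⟨s.2.1, by have h1 : s.2.1 < s.1.1 := s.2.2; have h2 := s.1.2; omega⟩, s.1),
    by exact s.2.2⟩
  left_inv q := rfl
  right_inv s := rfl

lemma card_pairIdx (p : ℕ) : Fintype.card (PairIdx p) = p * (2*p - 1) := by
  rw [Fintype.card_congr (pairEquiv p), Fintype.card_sigma]
  simp only [Fintype.card_fin]
  rw [Fin.sum_univ_eq_sum_range (fun i => i) (2*p)]
  have h1 := Finset.sum_range_id_mul_two (2*p)
  have h2 : 2*p*(2*p-1) = (p*(2*p-1))*2 := by
    rcases Nat.eq_zero_or_pos p with hp | hp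
    · subst hp; rfl
    · have : 2*p - 1 = 2*(p-1)+1 := by omega
      rw [this]
      obtain ⟨q, rfl⟩ : ∃ q, p = q + 1 := ⟨p-1, by omega⟩
      ring
  rw [h2] at h1
  exact Nat.eq_of_mul_eq_mul_right two_pos h1

end Stmt7Aux9


/-- For the (2p+1)-dimensional Heisenberg algebra, the space of skew-symmetric
bilinear CH-2-cocycles has dimension p(2p+1). -/
theorem stmt_7 (K : Type*) (L : Type*) [Field K] [CharZero K]
    [LieRing L] [LieAlgebra K L] (p : ℕ) (hp : 1 ≤ p)
    (B : Module.Basis (Fin (2 * p + 1)) K L)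
    (hb1 : ∀ i : Fin p, ⁅B ⟨2 * i.1, by have := i.2; omega⟩,
        B ⟨2 * i.1 + 1, by have := i.2; omega⟩⁆ = B ⟨2 * p, by omega⟩)
    (hb2 : ∀ i j : Fin (2 * p + 1),
        (∀ k : Fin p, ¬(i.1 = 2 * k.1 ∧ j.1 = 2 * k.1 + 1) ∧
          ¬(j.1 = 2 * k.1 ∧ i.1 = 2 * k.1 + 1)) → ⁅B i, B j⁆ = 0) :
    Module.finrank K (chTwoCocycles K L) = p * (2 * p + 1) := by
  classical
  open Stmt7Aux Stmt7Aux2 Stmt7Aux3 Stmt7Aux4 Stmt7Aux5 Stmt7Aux6 Stmt7Aux7 Stmt7Aux8 Stmt7Aux9 in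
  · have hbr := bracket_eq B hb1 hb2
    let F : ((Fin (2*p) → K) × (PairIdx p → K)) →ₗ[K] (chTwoCocycles K L) :=
      (GLm B).codRestrict _ (fun d => Gd_mem B hbr d)
    have hinj : Function.Injective F := by
      intro d d' h
      exact GLm_injective B hp (congrArg Subtype.val h)
    have hsurj : Function.Surjective F := by
      rintro ⟨φ, hφ1, hφ2⟩
      obtain ⟨d, hd⟩ := surj B hp hbr φ hφ1 hφ2
      exact ⟨d, Subtype.ext hd⟩
    have e := LinearEquiv.ofBijective F ⟨hinj, hsurj⟩
    rw [← LinearEquiv.finrank_eq e]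
    rw [Module.finrank_prod, Module.finrank_fintype_fun_eq_card,
      Module.finrank_fintype_fun_eq_card, Fintype.card_fin, card_pairIdx]
    obtain ⟨q, rfl⟩ : ∃ q, p = q + 1 := ⟨p-1, by omega⟩
    have h : 2*(q+1) - 1 = 2*q+1 := by omega
    rw [h]; ring
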